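/- For every k ≥ 1 there exists a false-twin-free graph on n = k + 2^k − 1 vertices with exactly k² bicliques. (Construction: take a clique K = {v₁,…,v_k} and an independent set with one vertex w_B for each nonempty subset B ⊆ K, where N(w_B) = B.) In particular, for n ≥ 75 such graphs have fewer than ⌈n/2⌉ bicliques. -/

import Mathlib

/-- A set of vertices inducing a complete bipartite subgraph (both sides nonempty). -/
def IsCompleteBipartiteSet {V : Type*} (G : SimpleGraph V) (B : Set V) : Prop :=
  ∃ X Y : Set V, X.Nonempty ∧ Y.Nonempty ∧ Disjoint X Y ∧ B = X ∪ Y ∧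
    (∀ x ∈ X, ∀ y ∈ Y, G.Adj x y) ∧
    (∀ x ∈ X, ∀ x' ∈ X, ¬ G.Adj x x') ∧
    (∀ y ∈ Y, ∀ y' ∈ Y, ¬ G.Adj y y')

/-- A biclique: a maximal set of vertices inducing a complete bipartite subgraph. -/
def IsBiclique {V : Type*} (G : SimpleGraph V) (B : Set V) : Prop :=
  IsCompleteBipartiteSet G B ∧
    ∀ B' : Set V, IsCompleteBipartiteSet G B' → B ⊆ B' → B' = B

/-- A vertex set that is a star: a center `c` adjacent to all other vertices of the set,
which are nonempty and pairwise non-adjacent (shape `K_{1,r}`, `r ≥ 1`). -/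
def IsStarSet {V : Type*} (G : SimpleGraph V) (B : Set V) : Prop :=
  ∃ c ∈ B, (B \ {c}).Nonempty ∧ (∀ w ∈ B, w ≠ c → G.Adj c w) ∧
    (∀ w ∈ B, ∀ z ∈ B, w ≠ c → z ≠ c → ¬ G.Adj w z)

/-- A graph is false-twin-free if no two distinct vertices have equal open neighborhoods. -/
def FalseTwinFree {V : Type*} (G : SimpleGraph V) : Prop :=
  ∀ u v : V, G.neighborSet u = G.neighborSet v → u = v

namespace BicliqueAux

/-! ### Transfer lemmas along a graph isomorphism -/

section Transfer

variable {α β : Type*} (e : α ≃ β) {Gα : SimpleGraph α} {Gβ : SimpleGraph β}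

lemma cbs_image (h : ∀ a b, Gα.Adj a b ↔ Gβ.Adj (e a) (e b)) {A : Set α}
    (hA : IsCompleteBipartiteSet Gα A) : IsCompleteBipartiteSet Gβ (e '' A) := by
  obtain ⟨X, Y, hXne, hYne, hdisj, hAeq, hadj, hX, hY⟩ := hA
  refine ⟨e '' X, e '' Y, hXne.image e, hYne.image e,
    (Set.disjoint_image_iff e.injective).2 hdisj, by rw [hAeq, Set.image_union], ?_, ?_, ?_⟩
  · rintro _ ⟨x, hx, rfl⟩ _ ⟨y, hy, rfl⟩
    exact (h x y).1 (hadj x hx y hy)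
  · rintro _ ⟨x, hx, rfl⟩ _ ⟨x', hx', rfl⟩ hc
    exact hX x hx x' hx' ((h x x').2 hc)
  · rintro _ ⟨y, hy, rfl⟩ _ ⟨y', hy', rfl⟩ hc
    exact hY y hy y' hy' ((h y y').2 hc)

lemma cbs_iff (h : ∀ a b, Gα.Adj a b ↔ Gβ.Adj (e a) (e b)) {A : Set α} :
    IsCompleteBipartiteSet Gα A ↔ IsCompleteBipartiteSet Gβ (e '' A) := by
  constructor
  · exact cbs_image e h
  · intro hB
    have := cbs_image e.symm (Gα := Gβ) (Gβ := Gα)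
      (fun a b => by simpa using (h (e.symm a) (e.symm b)).symm) hB
    rwa [Equiv.symm_image_image] at this
lemma biclique_image (h : ∀ a b, Gα.Adj a b ↔ Gβ.Adj (e a) (e b)) {A : Set α}
    (hA : IsBiclique Gα A) : IsBiclique Gβ (e '' A) := by
  refine ⟨cbs_image e h hA.1, ?_⟩
  intro B' hB' hsub
  have h2 : IsCompleteBipartiteSet Gα (e.symm '' B') := by
    apply (cbs_iff e h (A := e.symm '' B')).2
    rwa [Equiv.image_symm_image]
  have hsub2 : A ⊆ e.symm '' B' := by
    intro a ha
    exact ⟨e a, hsub ⟨a, ha, rfl⟩, by simp⟩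
  have := hA.2 _ h2 hsub2
  calc B' = e '' (e.symm '' B') := (Equiv.image_symm_image e B').symm
    _ = e '' A := by rw [this]

lemma biclique_set_eq (h : ∀ a b, Gα.Adj a b ↔ Gβ.Adj (e a) (e b)) :
    {B : Set β | IsBiclique Gβ B} = (Set.image e) '' {A : Set α | IsBiclique Gα A} := by
  ext B
  constructor
  · intro hB
    refine ⟨e.symm '' B, ?_, Equiv.image_symm_image e B⟩
    exact biclique_image e.symm (fun a b => by simpa using (h (e.symm a) (e.symm b)).symm) hB
  · rintro ⟨A, hA, rfl⟩
    exact biclique_image e h hA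

end Transfer

/-! ### The construction -/

variable {k : ℕ}

abbrev NES (k : ℕ) := {S : Finset (Fin k) // S.Nonempty}

abbrev V (k : ℕ) := Fin k ⊕ NES k

def adj : V k → V k → Prop
  | Sum.inl i, Sum.inl j => i ≠ j
  | Sum.inl i, Sum.inr S => i ∈ S.1
  | Sum.inr S, Sum.inl i => i ∈ S.1
  | Sum.inr _, Sum.inr _ => False

def G (k : ℕ) : SimpleGraph (V k) where
  Adj := adj
  symm := ⟨by rintro (i | S) (j | T) h <;> simp_all [adj] <;> exact fun h' => h h'.symm⟩
  loopless := ⟨by rintro (i | S) h <;> simp_all [adj]⟩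

@[simp] lemma adj_inl_inl {i j : Fin k} : (G k).Adj (Sum.inl i) (Sum.inl j) ↔ i ≠ j := Iff.rfl
@[simp] lemma adj_inl_inr {i : Fin k} {S : NES k} :
    (G k).Adj (Sum.inl i) (Sum.inr S) ↔ i ∈ S.1 := Iff.rfl
@[simp] lemma adj_inr_inl {i : Fin k} {S : NES k} :
    (G k).Adj (Sum.inr S) (Sum.inl i) ↔ i ∈ S.1 := Iff.rfl
@[simp] lemma adj_inr_inr {S T : NES k} : ¬ (G k).Adj (Sum.inr S) (Sum.inr T) := fun h => h

def sing (i : Fin k) : NES k := ⟨{i}, Finset.singleton_nonempty i⟩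

def pair (i j : Fin k) : NES k := ⟨{i, j}, Finset.insert_nonempty i {j}⟩

def star (i : Fin k) : Set (V k) :=
  {v | match v with | Sum.inl j => j = i | Sum.inr S => i ∈ S.1}

def dset (i j : Fin k) : Set (V k) :=
  {v | match v with | Sum.inl l => l = i ∨ l = j | Sum.inr S => i ∈ S.1 ∧ j ∉ S.1}

@[simp] lemma mem_star_inl {i j : Fin k} : Sum.inl j ∈ star i ↔ j = i := Iff.rfl
@[simp] lemma mem_star_inr {i : Fin k} {S : NES k} : Sum.inr S ∈ star i ↔ i ∈ S.1 := Iff.rfl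
@[simp] lemma mem_dset_inl {i j l : Fin k} : Sum.inl l ∈ dset i j ↔ l = i ∨ l = j := Iff.rfl
@[simp] lemma mem_dset_inr {i j : Fin k} {S : NES k} :
    Sum.inr S ∈ dset i j ↔ i ∈ S.1 ∧ j ∉ S.1 := Iff.rfl

lemma cbs_star (i : Fin k) : IsCompleteBipartiteSet (G k) (star i) := by
  refine ⟨{Sum.inl i}, Sum.inr '' {S : NES k | i ∈ S.1},
    Set.singleton_nonempty _, ⟨Sum.inr (sing i), ⟨sing i, by simp [sing], rfl⟩⟩, ?_, ?_, ?_, ?_, ?_⟩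
  · rw [Set.disjoint_left]
    rintro _ rfl ⟨S, hS, h⟩
    exact absurd h (by simp)
  · ext v
    rcases v with j | S <;> simp
  · rintro _ rfl _ ⟨S, hS, rfl⟩
    exact hS
  · rintro _ rfl _ rfl h
    exact (G k).irrefl h
  · rintro _ ⟨S, _, rfl⟩ _ ⟨T, _, rfl⟩ h
    exact adj_inr_inr h

lemma cbs_dset {i j : Fin k} (hij : i ≠ j) : IsCompleteBipartiteSet (G k) (dset i j) := by
  refine ⟨{Sum.inl i}, {Sum.inl j} ∪ Sum.inr '' {S : NES k | i ∈ S.1 ∧ j ∉ S.1},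
    Set.singleton_nonempty _, ⟨Sum.inl j, Or.inl rfl⟩, ?_, ?_, ?_, ?_, ?_⟩
  · rw [Set.disjoint_left]
    rintro _ rfl (h | ⟨S, hS, h⟩)
    · exact hij (Sum.inl.inj h)
    · exact absurd h (by simp)
  · ext v
    rcases v with l | S <;> simp [or_comm]
  · rintro _ rfl _ (rfl | ⟨S, hS, rfl⟩)
    · exact hij
    · exact hS.1
  · rintro _ rfl _ rfl h
    exact (G k).irrefl h
  · rintro _ (rfl | ⟨S, hS, rfl⟩) _ (rfl | ⟨T, hT, rfl⟩) h
    · exact (G k).irrefl h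
    · exact hT.2 h
    · exact hS.2 h
    · exact adj_inr_inr h

section Max

variable {X Y : Set (V k)}
  (hadj : ∀ x ∈ X, ∀ y ∈ Y, (G k).Adj x y)
  (hX : ∀ x ∈ X, ∀ x' ∈ X, ¬ (G k).Adj x x')
  (hY : ∀ y ∈ Y, ∀ y' ∈ Y, ¬ (G k).Adj y y')

include hadj hX hY

lemma star_max (i : Fin k) (hsub : star i ⊆ X ∪ Y) (hi : Sum.inl i ∈ X) :
    X ∪ Y ⊆ star i := by
  have hsi : Sum.inr (sing i) ∈ Y := by
    rcases hsub (show Sum.inr (sing i) ∈ star i by simp [sing]) with h | h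
    · exact absurd (hX _ hi _ h) (by simp [sing])
    · exact h
  rintro (l | T) (hc | hc)
  · -- inl l ∈ X : adjacent to inr (sing i)
    have := hadj _ hc _ hsi
    simp [sing] at this
    simp [this]
  · -- inl l ∈ Y : adjacent to inl i, consider pair i l
    have hli : i ≠ l := hadj _ hi _ hc
    have hp : Sum.inr (pair i l) ∈ Y := by
      rcases hsub (show Sum.inr (pair i l) ∈ star i by simp [pair]) with h | h
      · exact absurd (hX _ hi _ h) (by simp [pair])
      · exact h
    exact absurd (hY _ hc _ hp) (by simp [pair])
  · exact absurd (hadj _ hc _ hsi) (by simp)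
  · have := hadj _ hi _ hc
    simpa using this

lemma dset_max {i j : Fin k} (hij : i ≠ j) (hsub : dset i j ⊆ X ∪ Y)
    (hi : Sum.inl i ∈ X) (hj : Sum.inl j ∈ Y) : X ∪ Y ⊆ dset i j := by
  have hsi : Sum.inr (sing i) ∈ Y := by
    rcases hsub (show Sum.inr (sing i) ∈ dset i j by
      simp [sing, (Ne.symm hij)]) with h | h
    · exact absurd (hX _ hi _ h) (by simp [sing])
    · exact h
  rintro (l | T) (hc | hc)
  · have := hadj _ hc _ hsi
    simp [sing] at this
    simp [this]
  · have := hY _ hc _ hj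
    simp at this
    simp [this]
  · exact absurd (hadj _ hc _ hsi) (by simp)
  · have h1 := hadj _ hi _ hc
    have h2 := hY _ hj _ hc
    simp at h1 h2
    simp [h1, h2]

end Max

lemma biclique_star (i : Fin k) : IsBiclique (G k) (star i) := by
  refine ⟨cbs_star i, ?_⟩
  rintro B' ⟨X, Y, hXne, hYne, hdisj, rfl, hadj, hX, hY⟩ hsub
  refine Set.Subset.antisymm ?_ hsub
  rcases hsub (show Sum.inl i ∈ star i by simp) with hi | hi
  · exact star_max hadj hX hY i hsub hi
  · have := star_max (X := Y) (Y := X)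
      (fun y hy x hx => ((hadj x hx y hy).symm)) hY hX i (by rwa [Set.union_comm]) hi
    rwa [Set.union_comm]

lemma biclique_dset {i j : Fin k} (hij : i ≠ j) : IsBiclique (G k) (dset i j) := by
  refine ⟨cbs_dset hij, ?_⟩
  rintro B' ⟨X, Y, hXne, hYne, hdisj, rfl, hadj, hX, hY⟩ hsub
  refine Set.Subset.antisymm ?_ hsub
  have hiB := hsub (show Sum.inl i ∈ dset i j by simp)
  have hjB := hsub (show Sum.inl j ∈ dset i j by simp)
  rcases hiB with hi | hi <;> rcases hjB with hj | hj
  · exact absurd (hX _ hi _ hj) (by simp [hij])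
  · exact dset_max hadj hX hY hij hsub hi hj
  · have := dset_max (X := Y) (Y := X)
      (fun y hy x hx => ((hadj x hx y hy).symm)) hY hX hij (by rwa [Set.union_comm]) hi hj
    rwa [Set.union_comm]
  · exact absurd (hY _ hi _ hj) (by simp [hij])

/-- Auxiliary classification: if `inl i ∈ X`, the biclique is contained in a star or a dset. -/
lemma classify_aux {X Y : Set (V k)} (hYne : Y.Nonempty)
    (hadj : ∀ x ∈ X, ∀ y ∈ Y, (G k).Adj x y)
    (hX : ∀ x ∈ X, ∀ x' ∈ X, ¬ (G k).Adj x x')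
    (hY : ∀ y ∈ Y, ∀ y' ∈ Y, ¬ (G k).Adj y y')
    {i : Fin k} (hi : Sum.inl i ∈ X) :
    (X ∪ Y ⊆ star i) ∨ ∃ a b, a ≠ b ∧ X ∪ Y ⊆ dset a b := by
  by_cases hl : ∃ j, Sum.inl j ∈ Y
  · obtain ⟨j, hj⟩ := hl
    have hij : i ≠ j := hadj _ hi _ hj
    by_cases hr : ∃ S : NES k, Sum.inr S ∈ Y
    · -- Y contains an inr: X = {inl i}, result dset i j
      obtain ⟨S₀, hS₀⟩ := hr
      right
      refine ⟨i, j, hij, ?_⟩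
      rintro (l | T) (hc | hc)
      · -- inl l ∈ X : adj to inr S₀, and not adj to inl i
        have h1 := hadj _ hc _ hS₀
        have h2 := hX _ hc _ hi
        simp at h2
        simp [h2]
      · -- inl l ∈ Y : not adj to inl j
        have := hY _ hc _ hj
        simp at this
        simp [this]
      · -- inr T ∈ X : adj to inr S₀ impossible
        exact absurd (hadj _ hc _ hS₀) (by simp)
      · have h1 := hadj _ hi _ hc
        have h2 := hY _ hj _ hc
        simp at h1 h2
        simp [h1, h2]
    · -- Y has no inr: Y = {inl j}, result dset j i
      push_neg at hr
      right
      refine ⟨j, i, hij.symm, ?_⟩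
      rintro (l | T) (hc | hc)
      · -- inl l ∈ X : not adj to inl i, so l = i
        have := hX _ hc _ hi
        simp at this
        simp [this]
      · -- inl l ∈ Y : not adj to inl j
        have := hY _ hc _ hj
        simp at this
        simp [this]
      · -- inr T ∈ X : adj to inl j, not adj to inl i
        have h1 := hadj _ hc _ hj
        have h2 := hX _ hc _ hi
        simp at h1 h2
        simp [h1, h2]
      · exact absurd hc (hr T)
  · -- no inl in Y: star i
    push_neg at hl
    left
    obtain ⟨y₀, hy₀⟩ := hYne
    obtain ⟨S₀, rfl⟩ : ∃ S : NES k, y₀ = Sum.inr S := by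
      rcases y₀ with l | S
      · exact absurd hy₀ (hl l)
      · exact ⟨S, rfl⟩
    rintro (l | T) (hc | hc)
    · have h1 := hadj _ hc _ hy₀
      have h2 := hX _ hc _ hi
      simp at h2
      simp [h2]
    · exact absurd hc (hl l)
    · exact absurd (hadj _ hc _ hy₀) (by simp)
    · have := hadj _ hi _ hc
      simpa using this

lemma biclique_classify {C : Set (V k)} (h : IsBiclique (G k) C) :
    (∃ i, C = star i) ∨ ∃ a b, a ≠ b ∧ C = dset a b := by
  obtain ⟨⟨X, Y, hXne, hYne, hdisj, rfl, hadj, hX, hY⟩, hmax⟩ := h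
  obtain ⟨x₀, hx₀⟩ := hXne
  obtain ⟨y₀, hy₀⟩ := hYne
  have key : (∃ i, X ∪ Y ⊆ star i) ∨ ∃ a b, a ≠ b ∧ X ∪ Y ⊆ dset a b := by
    have hadj' : ∀ x ∈ Y, ∀ y ∈ X, (G k).Adj x y := fun y hy x hx => (hadj x hx y hy).symm
    rcases x₀ with i | S
    · rcases classify_aux ⟨_, hy₀⟩ hadj hX hY hx₀ with h | h
      · exact Or.inl ⟨i, h⟩
      · exact Or.inr h
    · rcases y₀ with i | T
      · rcases classify_aux ⟨_, hx₀⟩ hadj' hY hX hy₀ with h | h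
        · exact Or.inl ⟨i, by rwa [Set.union_comm]⟩
        · obtain ⟨a, b, hab, h⟩ := h
          exact Or.inr ⟨a, b, hab, by rwa [Set.union_comm]⟩
      · exact absurd (hadj _ hx₀ _ hy₀) (by simp)
  rcases key with ⟨i, hsub⟩ | ⟨a, b, hab, hsub⟩
  · exact Or.inl ⟨i, (hmax _ (cbs_star i) hsub).symm⟩
  · exact Or.inr ⟨a, b, hab, (hmax _ (cbs_dset hab) hsub).symm⟩

/-! ### Counting the bicliques -/

def param (k : ℕ) : Fin k ⊕ {p : Fin k × Fin k // p.1 ≠ p.2} → Set (V k)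
  | Sum.inl i => star i
  | Sum.inr p => dset p.1.1 p.1.2

lemma star_ne_dset {i a b : Fin k} (hab : a ≠ b) : star i ≠ dset a b := by
  intro h
  have ha : Sum.inl a ∈ dset a b := by simp
  have hb : Sum.inl b ∈ dset a b := by simp
  rw [← h] at ha hb
  simp at ha hb
  exact hab (ha.trans hb.symm)

lemma param_injective : Function.Injective (param k) := by
  rintro (i | ⟨⟨a, b⟩, hab⟩) (i' | ⟨⟨a', b'⟩, hab'⟩) h
  · simp only [param] at h
    have : Sum.inl i ∈ star i' := h ▸ (by simp : Sum.inl i ∈ star i)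
    simp at this
    rw [this]
  · exact absurd h (star_ne_dset hab')
  · exact absurd h.symm (star_ne_dset hab)
  · simp only [param] at h
    have h0 : Sum.inr (sing a) ∈ dset a b := by
      simp only [mem_dset_inr, sing]
      exact ⟨Finset.mem_singleton_self a, by simp [Ne.symm hab]⟩
    have h1 : Sum.inr (sing a) ∈ dset a' b' := h ▸ h0
    simp only [mem_dset_inr, sing, Finset.mem_singleton] at h1
    obtain ⟨h1a, -⟩ := h1
    have h2 : Sum.inl b ∈ dset a' b' := h ▸ (by simp : Sum.inl b ∈ dset a b)
    simp only [mem_dset_inl] at h2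
    have hbb : b = b' := by
      rcases h2 with h2 | h2
      · exact absurd (h2.trans h1a).symm hab
      · exact h2
    congr 1
    exact Subtype.ext (by show (a, b) = (a', b'); rw [h1a, hbb])

lemma biclique_set_eq_range :
    {B : Set (V k) | IsBiclique (G k) B} = Set.range (param k) := by
  ext C
  constructor
  · intro h
    rcases biclique_classify h with ⟨i, rfl⟩ | ⟨a, b, hab, rfl⟩
    · exact ⟨Sum.inl i, rfl⟩
    · exact ⟨Sum.inr ⟨(a, b), hab⟩, rfl⟩
  · rintro ⟨(i | ⟨⟨a, b⟩, hab⟩), rfl⟩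
    · exact biclique_star i
    · exact biclique_dset hab

def diagEquiv (k : ℕ) : Fin k ≃ {p : Fin k × Fin k // p.1 = p.2} where
  toFun i := ⟨(i, i), rfl⟩
  invFun p := p.1.1
  left_inv i := rfl
  right_inv := by rintro ⟨⟨a, b⟩, h⟩; cases h; rfl

lemma card_offdiag (k : ℕ) : Nat.card {p : Fin k × Fin k // p.1 ≠ p.2} = k * k - k := by
  rw [Nat.card_eq_fintype_card, Fintype.card_subtype_compl (fun p : Fin k × Fin k => p.1 = p.2)]
  rw [← Nat.card_eq_fintype_card (α := {p : Fin k × Fin k // p.1 = p.2}),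
    ← Nat.card_congr (diagEquiv k)]
  simp [Nat.card_eq_fintype_card]

lemma ncard_bicliques (hk : 1 ≤ k) :
    {B : Set (V k) | IsBiclique (G k) B}.ncard = k ^ 2 := by
  rw [biclique_set_eq_range, ← Nat.card_coe_set_eq,
    Nat.card_range_of_injective param_injective, Nat.card_sum, card_offdiag,
    Nat.card_eq_fintype_card, Fintype.card_fin]
  have h1 : k ≤ k * k := Nat.le_mul_of_pos_left k (by omega)
  have : k ^ 2 = k * k := sq k
  omega

/-! ### False-twin-freeness -/

lemma ftf : FalseTwinFree (G k) := by
  intro u v h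
  have key : ∀ w, (G k).Adj u w ↔ (G k).Adj v w := by
    intro w
    have h1 : w ∈ (G k).neighborSet u ↔ w ∈ (G k).neighborSet v := by rw [h]
    simpa using h1
  rcases u with i | S <;> rcases v with j | T
  · by_contra hne
    have hij : i ≠ j := fun h' => hne (by rw [h'])
    have := (key (Sum.inr (sing i))).1 (by simp [sing])
    simp [sing] at this
    exact hij this.symm
  · have := (key (Sum.inr (sing i))).1 (by simp [sing])
    simp at this
  · have := (key (Sum.inr (sing j))).2 (by simp [sing])
    simp at this
  · congr 1
    ext1
    ext i
    exact ⟨fun hi => (key (Sum.inl i)).1 hi, fun hi => (key (Sum.inl i)).2 hi⟩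

/-! ### Cardinality of the vertex type -/

lemma card_NES (k : ℕ) : Fintype.card (NES k) = 2 ^ k - 1 := by
  have h1 : Fintype.card (NES k) = Fintype.card {S : Finset (Fin k) // ¬ S = ∅} :=
    Fintype.card_congr (Equiv.subtypeEquivRight (by
      intro S; rw [Finset.nonempty_iff_ne_empty]))
  rw [h1, Fintype.card_subtype_compl, Fintype.card_subtype_eq, Fintype.card_finset, Fintype.card_fin]

lemma card_V (k : ℕ) : Fintype.card (V k) = k + 2 ^ k - 1 := by
  have h2 : 1 ≤ 2 ^ k := Nat.one_le_two_pow
  rw [Fintype.card_sum, Fintype.card_fin, card_NES]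
  omega

/-! ### Arithmetic -/

lemma arith_aux1 : ∀ n, 7 ≤ n → 4 * n + 1 ≤ 2 ^ n := by
  intro n hn
  induction n, hn using Nat.le_induction with
  | base => norm_num
  | succ n hn ih =>
    have : 2 ^ (n + 1) = 2 * 2 ^ n := by ring
    omega

lemma arith_aux2 : ∀ n, 7 ≤ n → 2 * n ^ 2 + 2 ≤ n + 2 ^ n := by
  intro n hn
  induction n, hn using Nat.le_induction with
  | base => norm_num
  | succ n hn ih =>
    have h1 := arith_aux1 n hn
    have h2 : (n + 1) ^ 2 = n ^ 2 + 2 * n + 1 := by ring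
    have h3 : 2 ^ (n + 1) = 2 * 2 ^ n := by ring
    omega

lemma arith (k : ℕ) (hk : 1 ≤ k) (h : 75 ≤ k + 2 ^ k - 1) :
    k ^ 2 < (k + 2 ^ k - 1 + 1) / 2 := by
  have hk7 : 7 ≤ k := by
    by_contra hlt
    push_neg at hlt
    interval_cases k <;> omega
  have h2 := arith_aux2 k hk7
  have h3 : 1 ≤ 2 ^ k := Nat.one_le_two_pow
  omega

end BicliqueAux

open BicliqueAux in
/-- For every k ≥ 1 there is a false-twin-free graph on n = k + 2^k − 1 vertices
with exactly k² bicliques; for n ≥ 75 this is fewer than ⌈n/2⌉. -/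
theorem exists_twin_free_graph_few_bicliques (k : ℕ) (hk : 1 ≤ k) :
    ∃ G : SimpleGraph (Fin (k + 2 ^ k - 1)), FalseTwinFree G ∧
      {B : Set (Fin (k + 2 ^ k - 1)) | IsBiclique G B}.ncard = k ^ 2 ∧
      (75 ≤ k + 2 ^ k - 1 → k ^ 2 < (k + 2 ^ k - 1 + 1) / 2) := by
  have e : V k ≃ Fin (k + 2 ^ k - 1) := Fintype.equivFinOfCardEq (card_V k)
  refine ⟨(G k).comap (e.symm : Fin (k + 2 ^ k - 1) → V k), ?_, ?_, arith k hk⟩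
  · -- false twin free
    intro u v h
    have : (G k).neighborSet (e.symm u) = (G k).neighborSet (e.symm v) := by
      ext x
      have hx1 : x = e.symm (e x) := by simp
      constructor <;> intro hx
      · have : e x ∈ SimpleGraph.neighborSet ((G k).comap (e.symm : _ → V k)) u := by
          simp only [SimpleGraph.mem_neighborSet, SimpleGraph.comap_adj]
          rw [← hx1]; exact hx
        rw [h] at this
        simp only [SimpleGraph.mem_neighborSet, SimpleGraph.comap_adj] at this
        rw [← hx1] at this
        exact this
      · have : e x ∈ SimpleGraph.neighborSet ((G k).comap (e.symm : _ → V k)) v := by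
          simp only [SimpleGraph.mem_neighborSet, SimpleGraph.comap_adj]
          rw [← hx1]; exact hx
        rw [← h] at this
        simp only [SimpleGraph.mem_neighborSet, SimpleGraph.comap_adj] at this
        rw [← hx1] at this
        exact this
    have := ftf _ _ this
    have := congrArg e this
    simpa using this
  · -- biclique count
    have hadj : ∀ a b : V k, (G k).Adj a b ↔
        ((G k).comap (e.symm : _ → V k)).Adj (e a) (e b) := by
      intro a b
      simp
    rw [biclique_set_eq e hadj, Set.ncard_image_of_injective _ (Set.image_injective.2 e.injective)]
    exact ncard_bicliques hk
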